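/- Let α > 2, τ > 0, Δh > 0, and λ > 0 be real and let N_a be a positive integer. For positive integers N_U with 1 ≤ N_U ≤ N_a define w(N_U) := ω(N_U, α, τ/(N_a − N_U + 1)) with ω(N,α,t) := 1 + 2·∫_{1}^{∞} x · (1 − (1 + t·x^{−α})^{−N}) dx, and define CP†(N_U) := exp( −πλ·Δh²·( w(N_U) − 1 ) ) / w(N_U). Then CP†(1) > CP†(N_U) for every integer N_U with 2 ≤ N_U ≤ N_a. -/

import Mathlib

open MeasureTheory Set Real

/-- The interference functional `ω(N, α, t)` of the paper, in integral form. -/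
noncomputable def omegaFun (N : ℕ) (α t : ℝ) : ℝ :=
  1 + 2 * ∫ x in Ioi (1 : ℝ), x * (1 - ((1 + t * x ^ (-α)) ^ N)⁻¹)

/-- The approximate coverage probability of Proposition 1:
`CP†(N_U) = e^{−πλΔh²(w(N_U)−1)} / w(N_U)` with `w(N_U) = ω(N_U, α, τ/(Na − N_U + 1))`. -/
noncomputable def approxCP (Nu Na : ℕ) (α τ Δh lam : ℝ) : ℝ :=
  Real.exp (-(π * lam * Δh ^ 2 * (omegaFun Nu α (τ / ((Na : ℝ) - Nu + 1)) - 1))) /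
    omegaFun Nu α (τ / ((Na : ℝ) - Nu + 1))

/-- Auxiliary: `(1+u)^N - 1 ≤ N u (1+u)^N` for `u ≥ 0`. -/
lemma aux_pow_sub_one_le (N : ℕ) {u : ℝ} (hu : 0 ≤ u) :
    (1 + u) ^ N - 1 ≤ N * u * (1 + u) ^ N := by
  induction N with
  | zero => simp
  | succ n ih =>
    have hpow : (0:ℝ) ≤ (1 + u) ^ n := by positivity
    have hn : (0:ℝ) ≤ n := Nat.cast_nonneg n
    have hge : (1:ℝ) ≤ (1 + u) ^ n := one_le_pow₀ (by linarith)
    push_cast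
    rw [pow_succ]
    nlinarith [ih, mul_nonneg (mul_nonneg (mul_nonneg hn hu) hu) hpow,
      mul_nonneg (mul_nonneg hu hu) hpow]

/-- The integrand of `omegaFun` is nonneg and bounded by `N t x^{1-α}` on `Ioi 1`. -/
lemma aux_integrand_bounds (N : ℕ) {α t : ℝ} (ht : 0 ≤ t) {x : ℝ} (hx : 1 < x) :
    0 ≤ x * (1 - ((1 + t * x ^ (-α)) ^ N)⁻¹) ∧
      x * (1 - ((1 + t * x ^ (-α)) ^ N)⁻¹) ≤ N * t * x ^ (1 - α) := by
  have hx0 : (0:ℝ) < x := lt_trans one_pos hx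
  have hu : 0 ≤ t * x ^ (-α) := mul_nonneg ht (le_of_lt (rpow_pos_of_pos hx0 _))
  set u := t * x ^ (-α) with hudef
  have hb : (1:ℝ) ≤ 1 + u := by linarith
  have hbp : (0:ℝ) < (1 + u) ^ N := by positivity
  have h1 : ((1 + u) ^ N)⁻¹ ≤ 1 := by
    rw [inv_le_one_iff₀]; right; exact one_le_pow₀ hb
  have h2 : 1 - ((1 + u) ^ N)⁻¹ ≤ N * u := by
    have hkey : (1 - (N:ℝ) * u) * (1 + u) ^ N ≤ 1 := by
      have := aux_pow_sub_one_le N hu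
      nlinarith
    have : 1 - (N:ℝ) * u ≤ ((1 + u) ^ N)⁻¹ := by
      rw [inv_eq_one_div, le_div_iff₀ hbp]; exact hkey
    linarith
  constructor
  · exact mul_nonneg (le_of_lt hx0) (by linarith)
  · have : x * (1 - ((1 + u) ^ N)⁻¹) ≤ x * (N * u) :=
      mul_le_mul_of_nonneg_left h2 (le_of_lt hx0)
    calc x * (1 - ((1 + u) ^ N)⁻¹) ≤ x * (N * u) := this
      _ = N * t * (x ^ (1:ℝ) * x ^ (-α)) := by rw [rpow_one]; ring
      _ = N * t * x ^ (1 - α) := by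
          rw [← rpow_add hx0]; ring_nf

lemma aux_integrableOn (N : ℕ) {α t : ℝ} (hα : 2 < α) (ht : 0 < t) :
    IntegrableOn (fun x => x * (1 - ((1 + t * x ^ (-α)) ^ N)⁻¹)) (Ioi (1:ℝ)) := by
  have hmeas : AEStronglyMeasurable
      (fun x => x * (1 - ((1 + t * x ^ (-α)) ^ N)⁻¹)) (volume.restrict (Ioi (1:ℝ))) := by
    apply ContinuousOn.aestronglyMeasurable _ measurableSet_Ioi
    apply ContinuousOn.mul continuousOn_id
    apply ContinuousOn.sub continuousOn_const
    apply ContinuousOn.inv₀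
    · exact (continuousOn_const.add (continuousOn_const.mul
        (ContinuousOn.rpow_const continuousOn_id
          (fun x hx => Or.inl (ne_of_gt (lt_trans one_pos hx)))))).pow N
    · intro x hx
      have hx0 : (0:ℝ) < x := lt_trans one_pos hx
      have : (0:ℝ) < 1 + t * x ^ (-α) := by
        have := rpow_pos_of_pos hx0 (-α); nlinarith
      positivity
  have hg : IntegrableOn (fun x => N * t * x ^ (1 - α)) (Ioi (1:ℝ)) :=
    (integrableOn_Ioi_rpow_of_lt (by linarith) one_pos).const_mul _
  refine hg.mono' hmeas ?_
  filter_upwards [ae_restrict_mem measurableSet_Ioi] with x hx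
  obtain ⟨h0, h1⟩ := aux_integrand_bounds N (le_of_lt ht) hx
  rw [Real.norm_eq_abs, abs_of_nonneg h0]; exact h1

/-- Strict monotonicity of the integral in `(N, t)`. -/
lemma aux_omega_lt {α : ℝ} (hα : 2 < α) {t1 t2 : ℝ} (ht1 : 0 < t1) (ht12 : t1 < t2)
    {N : ℕ} (hN : 1 ≤ N) : omegaFun 1 α t1 < omegaFun N α t2 := by
  have ht2 : 0 < t2 := lt_trans ht1 ht12
  set f1 : ℝ → ℝ := fun x => x * (1 - ((1 + t1 * x ^ (-α)) ^ 1)⁻¹) with hf1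
  set f2 : ℝ → ℝ := fun x => x * (1 - ((1 + t2 * x ^ (-α)) ^ N)⁻¹) with hf2
  have hi1 : IntegrableOn f1 (Ioi (1:ℝ)) := aux_integrableOn 1 hα ht1
  have hi2 : IntegrableOn f2 (Ioi (1:ℝ)) := aux_integrableOn N hα ht2
  have hlt : ∀ x ∈ Ioi (1:ℝ), f1 x < f2 x := by
    intro x hx
    have hx1 : (1:ℝ) < x := hx
    have hx0 : (0:ℝ) < x := lt_trans one_pos hx1
    have hv : (0:ℝ) < x ^ (-α) := rpow_pos_of_pos hx0 _
    have hb1 : (0:ℝ) < 1 + t1 * x ^ (-α) := by nlinarith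
    have hb2 : (1:ℝ) < 1 + t2 * x ^ (-α) := by nlinarith
    have hpowlt : (1 + t1 * x ^ (-α)) ^ 1 < (1 + t2 * x ^ (-α)) ^ N := by
      calc (1 + t1 * x ^ (-α)) ^ 1 = 1 + t1 * x ^ (-α) := pow_one _
        _ < 1 + t2 * x ^ (-α) := by nlinarith
        _ ≤ (1 + t2 * x ^ (-α)) ^ N := le_self_pow₀ (le_of_lt hb2) (by omega)
    have hinv : ((1 + t2 * x ^ (-α)) ^ N)⁻¹ < ((1 + t1 * x ^ (-α)) ^ 1)⁻¹ := by
      apply inv_strictAnti₀ (by positivity) hpowlt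
    simp only [hf1, hf2]
    have : 1 - ((1 + t1 * x ^ (-α)) ^ 1)⁻¹ < 1 - ((1 + t2 * x ^ (-α)) ^ N)⁻¹ := by linarith
    exact mul_lt_mul_of_pos_left this hx0
  have hdiff : 0 < ∫ x in Ioi (1:ℝ), (f2 x - f1 x) := by
    rw [setIntegral_pos_iff_support_of_nonneg_ae]
    · have hsub : Ioi (1:ℝ) ⊆ Function.support (fun x => f2 x - f1 x) := by
        intro x hx
        exact ne_of_gt (sub_pos.mpr (hlt x hx))
      have : Function.support (fun x => f2 x - f1 x) ∩ Ioi (1:ℝ) = Ioi (1:ℝ) :=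
        inter_eq_self_of_subset_right hsub
      rw [this, Real.volume_Ioi]
      exact ENNReal.zero_lt_top
    · filter_upwards [ae_restrict_mem measurableSet_Ioi] with x hx
      exact sub_nonneg.mpr (le_of_lt (hlt x hx))
    · exact hi2.sub hi1
  have : ∫ x in Ioi (1:ℝ), f1 x < ∫ x in Ioi (1:ℝ), f2 x := by
    have h := integral_sub hi2 hi1
    rw [h] at hdiff
    linarith
  unfold omegaFun
  simp only [← hf1, ← hf2]
  linarith

lemma aux_omega_ge_one {α t : ℝ} (hα : 2 < α) (ht : 0 < t) (N : ℕ) :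
    1 ≤ omegaFun N α t := by
  unfold omegaFun
  have : 0 ≤ ∫ x in Ioi (1:ℝ), x * (1 - ((1 + t * x ^ (-α)) ^ N)⁻¹) := by
    apply setIntegral_nonneg measurableSet_Ioi
    intro x hx
    exact (aux_integrand_bounds N (le_of_lt ht) hx).1
  linarith

/-- for `α > 2`, `τ > 0`, `Δh > 0`, `λ > 0` and a positive integer `Na`,
single-user beamforming (`N_U = 1`) achieves strictly higher approximate coverage
probability than SDMA or full SDMA with `2 ≤ N_U ≤ Na`. -/
theorem SU_BF_maximizes_coverage_probability
    (α τ Δh lam : ℝ) (hα : 2 < α) (hτ : 0 < τ) (hΔh : 0 < Δh) (hlam : 0 < lam)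
    (Na : ℕ) (hNa : 0 < Na) :
    ∀ Nu : ℕ, 2 ≤ Nu → Nu ≤ Na →
      approxCP Nu Na α τ Δh lam < approxCP 1 Na α τ Δh lam := by
  intro Nu hNu2 hNuNa
  have hNaR : (0:ℝ) < Na := by exact_mod_cast hNa
  have hNuR : (2:ℝ) ≤ Nu := by exact_mod_cast hNu2
  have hNuNaR : (Nu:ℝ) ≤ Na := by exact_mod_cast hNuNa
  have hden2 : (0:ℝ) < (Na:ℝ) - Nu + 1 := by linarith
  have hden1 : (Na:ℝ) - Nu + 1 < (Na:ℝ) - 1 + 1 := by linarith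
  have hd1 : (Na:ℝ) - 1 + 1 = Na := by ring
  set t1 : ℝ := τ / ((Na:ℝ) - 1 + 1) with ht1def
  set t2 : ℝ := τ / ((Na:ℝ) - Nu + 1) with ht2def
  have ht1 : 0 < t1 := by rw [ht1def, hd1]; positivity
  have ht12 : t1 < t2 := by
    rw [ht1def, ht2def]
    exact div_lt_div_of_pos_left hτ hden2 hden1
  have ht2 : 0 < t2 := lt_trans ht1 ht12
  have hw1 : 1 ≤ omegaFun 1 α t1 := aux_omega_ge_one hα ht1 1
  have hwlt : omegaFun 1 α t1 < omegaFun Nu α t2 := aux_omega_lt hα ht1 ht12 (by omega)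
  unfold approxCP
  simp only [Nat.cast_one]
  rw [← ht1def, ← ht2def]
  have hc : 0 < π * lam * Δh ^ 2 := by positivity
  set w1 := omegaFun 1 α t1
  set w2 := omegaFun Nu α t2
  have hw1p : 0 < w1 := lt_of_lt_of_le one_pos hw1
  have hw2p : 0 < w2 := lt_trans hw1p hwlt
  have hexp : Real.exp (-(π * lam * Δh ^ 2 * (w2 - 1))) <
      Real.exp (-(π * lam * Δh ^ 2 * (w1 - 1))) := by
    apply Real.exp_lt_exp.mpr
    nlinarith
  calc Real.exp (-(π * lam * Δh ^ 2 * (w2 - 1))) / w2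
      < Real.exp (-(π * lam * Δh ^ 2 * (w1 - 1))) / w2 :=
        div_lt_div_of_pos_right hexp hw2p
    _ < Real.exp (-(π * lam * Δh ^ 2 * (w1 - 1))) / w1 :=
        div_lt_div_of_pos_left (Real.exp_pos _) hw1p hwlt
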